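/- arXiv:2009.08819 — 6 statements merged into one kernel-verified Lean document; each statement's English description precedes it below -/
import Mathlib

section
/- Let G_0^p, …, G_{n_g}^p : ℝ^{n_u} → ℝ and G_0, …, G_{n_g} : ℝ^{n_u} → ℝ be differentiable at a point u∞ ∈ ℝ^{n_u}. Define the modifiers ε_i := G_i^p(u∞) − G_i(u∞) for i = 1,…,n_g and λ_i := ∇G_i^p(u∞) − ∇G_i(u∞) for i = 0,…,n_g, and define the modified cost Ĝ_0(u) := G_0(u) + ⟨λ_0, u⟩ and the modified constraints Ĝ_i(u) := G_i(u) + ε_i + ⟨λ_i, u − u∞⟩ for i = 1,…,n_g. Then for every vector of multipliers μ ∈ ℝ^{n_g} with μ_i ≥ 0, the point u∞ satisfies the KKT conditions of the modified problem (minimize Ĝ_0 subject to Ĝ_i ≤ 0) with multipliers μ — i.e. ∇Ĝ_0(u∞) + Σ_{i=1}^{n_g} μ_i ∇Ĝ_i(u∞) = 0, Ĝ_i(u∞) ≤ 0 for all i, and μ_i Ĝ_i(u∞) = 0 for all i — if and only if u∞ satisfies the KKT conditions of the plant problem (minimize G_0^p subject to G_i^p ≤ 0) with the same multipliers μ, i.e.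 ∇G_0^p(u∞) + Σ_{i=1}^{n_g} μ_i ∇G_i^p(u∞) = 0, G_i^p(u∞) ≤ 0 for all i, and μ_i G_i^p(u∞) = 0 for all i. -/
open scoped RealInnerProductSpace

open InnerProductSpace in
private lemma hasGradientAt_add_aux
    {F : Type*} [NormedAddCommGroup F] [InnerProductSpace ℝ F] [CompleteSpace F]
    {f₁ f₂ : F → ℝ} {g₁ g₂ x : F}
    (h₁ : HasGradientAt f₁ g₁ x) (h₂ : HasGradientAt f₂ g₂ x) :
    HasGradientAt (fun u => f₁ u + f₂ u) (g₁ + g₂) x := by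
  rw [hasGradientAt_iff_hasFDerivAt] at *
  rw [map_add]
  exact h₁.add h₂

open InnerProductSpace in
private lemma hasGradientAt_inner
    {F : Type*} [NormedAddCommGroup F] [InnerProductSpace ℝ F] [CompleteSpace F]
    (c x : F) : HasGradientAt (fun u => ⟪c, u⟫) c x := by
  rw [hasGradientAt_iff_hasFDerivAt]
  exact (toDual ℝ F c).hasFDerivAt

/-- KKT-matching property of modifier adaptation: with zeroth-order modifiers
`ε_i = G_i^p(u∞) − G_i(u∞)` and first-order modifiers `λ_i = ∇G_i^p(u∞) − ∇G_i(u∞)`,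
a point `u∞` is a KKT point of the modified problem with multipliers `μ` if and only if
it is a KKT point of the plant problem with the same multipliers. -/
theorem modifier_adaptation_KKT_matching
    {n ng : ℕ}
    (G0p G0 : EuclideanSpace ℝ (Fin n) → ℝ)
    (Gp G : Fin ng → EuclideanSpace ℝ (Fin n) → ℝ)
    (uInf : EuclideanSpace ℝ (Fin n))
    (hG0p : DifferentiableAt ℝ G0p uInf) (hG0 : DifferentiableAt ℝ G0 uInf)
    (hGp : ∀ i, DifferentiableAt ℝ (Gp i) uInf)
    (hG : ∀ i, DifferentiableAt ℝ (G i) uInf)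
    (ε : Fin ng → ℝ) (hε : ∀ i, ε i = Gp i uInf - G i uInf)
    (lam0 : EuclideanSpace ℝ (Fin n))
    (hlam0 : lam0 = gradient G0p uInf - gradient G0 uInf)
    (lam : Fin ng → EuclideanSpace ℝ (Fin n))
    (hlam : ∀ i, lam i = gradient (Gp i) uInf - gradient (G i) uInf)
    (Ghat0 : EuclideanSpace ℝ (Fin n) → ℝ)
    (hGhat0 : ∀ u, Ghat0 u = G0 u + ⟪lam0, u⟫)
    (Ghat : Fin ng → EuclideanSpace ℝ (Fin n) → ℝ)
    (hGhat : ∀ i u, Ghat i u = G i u + ε i + ⟪lam i, u - uInf⟫)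
    (μ : Fin ng → ℝ) (hμ : ∀ i, 0 ≤ μ i) :
    (gradient Ghat0 uInf + ∑ i, μ i • gradient (Ghat i) uInf = 0 ∧
      (∀ i, Ghat i uInf ≤ 0) ∧ (∀ i, μ i * Ghat i uInf = 0)) ↔
    (gradient G0p uInf + ∑ i, μ i • gradient (Gp i) uInf = 0 ∧
      (∀ i, Gp i uInf ≤ 0) ∧ (∀ i, μ i * Gp i uInf = 0)) := by
  have hval : ∀ i, Ghat i uInf = Gp i uInf := by
    intro i
    rw [hGhat i uInf, hε i, sub_self, inner_zero_right]
    ring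
  have hgrad0 : gradient Ghat0 uInf = gradient G0p uInf := by
    have h : HasGradientAt Ghat0 (gradient G0 uInf + lam0) uInf := by
      have := hasGradientAt_add_aux hG0.hasGradientAt (hasGradientAt_inner lam0 uInf)
      exact this.congr_of_eventuallyEq (Filter.Eventually.of_forall fun u => hGhat0 u)
    rw [h.gradient, hlam0]
    abel
  have hgrad : ∀ i, gradient (Ghat i) uInf = gradient (Gp i) uInf := by
    intro i
    have h : HasGradientAt (Ghat i) (gradient (G i) uInf + lam i) uInf := by
      have h1 : HasGradientAt (fun u => G i u + ⟪lam i, u⟫) (gradient (G i) uInf + lam i)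
          uInf := hasGradientAt_add_aux (hG i).hasGradientAt (hasGradientAt_inner (lam i) uInf)
      have h2 : HasGradientAt (fun u => (G i u + ⟪lam i, u⟫) + (ε i - ⟪lam i, uInf⟫))
          (gradient (G i) uInf + lam i + 0) uInf :=
        hasGradientAt_add_aux h1 (hasGradientAt_const uInf _)
      rw [add_zero] at h2
      refine h2.congr_of_eventuallyEq (Filter.Eventually.of_forall fun u => ?_)
      rw [hGhat i u, inner_sub_right]
      ring
    rw [h.gradient, hlam i]
    abel
  rw [hgrad0]
  simp only [hgrad, hval]
end

section
/- Let G^p, G : ℝ^n → ℝ be continuously differentiable, let η ∈ (0,1], and let (u_k)_{k∈ℕ} be a sequence in ℝ^n converging to u∞. Let (ε_k) in ℝ and (λ_k) in ℝ^n satisfy the filtered modifier updates ε_{k+1} = (1 − η) ε_k + η [G^p(u_k) − G(u_k)] and λ_{k+1} = (1 − η) λ_k + η [∇G^p(u_k) − ∇G(u_k)] for all k. Then ε_k converges to G^p(u∞) − G(u∞) and λ_k converges to ∇G^p(u∞) − ∇G(u∞); that is, upon convergence of the iterates the modifiers satisfy the zeroth- and first-order matching conditions at u∞. -/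
open Filter

/-- An exponentially filtered sequence converges to the limit of its input. -/
lemma filtered_tendsto {E : Type*} [NormedAddCommGroup E] [NormedSpace ℝ E]
    (η : ℝ) (hη : η ∈ Set.Ioc (0 : ℝ) 1) (v : ℕ → E) (l : E)
    (hv : Tendsto v atTop (nhds l)) (x : ℕ → E)
    (hx : ∀ k, x (k + 1) = (1 - η) • x k + η • v k) :
    Tendsto x atTop (nhds l) := by
  obtain ⟨hη0, hη1⟩ := hη
  have h1η : (0:ℝ) ≤ 1 - η := by linarith
  rw [Metric.tendsto_atTop] at hv ⊢
  intro ε hε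
  obtain ⟨N, hN⟩ := hv (ε / 2) (by linarith)
  set C := ‖x N - l‖ with hC
  have key : ∀ m, ‖x (N + m) - l‖ ≤ (1 - η) ^ m * C + ε / 2 := by
    intro m
    induction m with
    | zero => simp [hC]; linarith
    | succ m ih =>
      have hv' : ‖v (N + m) - l‖ < ε / 2 := by
        have := hN (N + m) (Nat.le_add_right _ _)
        rwa [dist_eq_norm] at this
      have heq : x (N + m + 1) - l = (1 - η) • (x (N + m) - l) + η • (v (N + m) - l) := by
        rw [hx (N + m)]
        have : (1 - η) • l + η • l = l := by
          rw [← add_smul]; simp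
        module
      calc ‖x (N + (m+1)) - l‖ = ‖(1 - η) • (x (N + m) - l) + η • (v (N + m) - l)‖ := by
            rw [show N + (m+1) = N + m + 1 from rfl, heq]
        _ ≤ (1 - η) * ‖x (N + m) - l‖ + η * ‖v (N + m) - l‖ := by
            refine (norm_add_le _ _).trans ?_
            rw [norm_smul, norm_smul, Real.norm_eq_abs, Real.norm_eq_abs,
              abs_of_nonneg h1η, abs_of_pos hη0]
        _ ≤ (1 - η) * ((1 - η) ^ m * C + ε / 2) + η * (ε / 2) := by
            gcongr
        _ = (1 - η) ^ (m + 1) * C + ε / 2 := by ring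
  have hpow : Tendsto (fun m => (1 - η) ^ m * C) atTop (nhds 0) := by
    have : Tendsto (fun m : ℕ => (1 - η) ^ m) atTop (nhds 0) := by
      apply tendsto_pow_atTop_nhds_zero_of_abs_lt_one
      rw [abs_of_nonneg h1η]; linarith
    simpa using this.mul_const C
  rw [Metric.tendsto_atTop] at hpow
  obtain ⟨M, hM⟩ := hpow (ε / 2) (by linarith)
  refine ⟨N + M, fun k hk => ?_⟩
  have hk' : k = N + (k - N) := by omega
  have hkM : M ≤ k - N := by omega
  have h1 := key (k - N)
  have h2 := hM (k - N) hkM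
  rw [Real.dist_eq, sub_zero,
    abs_of_nonneg (mul_nonneg (pow_nonneg h1η _) (norm_nonneg _))] at h2
  rw [dist_eq_norm, hk']
  calc ‖x (N + (k - N)) - l‖ ≤ (1 - η) ^ (k - N) * C + ε / 2 := h1
    _ < ε / 2 + ε / 2 := by linarith
    _ = ε := by ring

lemma continuous_gradient_of_contDiff {E : Type*} [NormedAddCommGroup E]
    [InnerProductSpace ℝ E] [CompleteSpace E]
    (f : E → ℝ) (hf : ContDiff ℝ 1 f) : Continuous (gradient f) := by
  have : Continuous (fderiv ℝ f) := hf.continuous_fderiv one_ne_zero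
  have heq : gradient f = fun x => (InnerProductSpace.toDual ℝ E).symm (fderiv ℝ f x) := by
    funext x; rfl
  rw [heq]
  exact (InnerProductSpace.toDual ℝ E).symm.continuous.comp this

/-- Upon convergence of the RTO iterates `u_k → u∞`, the exponentially filtered
zeroth- and first-order modifiers converge to the plant-model mismatch in value
and gradient at `u∞`. -/
theorem filtered_modifiers_satisfy_matching_conditions
    {n : ℕ} (Gp G : EuclideanSpace ℝ (Fin n) → ℝ)
    (hGp : ContDiff ℝ 1 Gp) (hG : ContDiff ℝ 1 G)
    (η : ℝ) (hη : η ∈ Set.Ioc (0 : ℝ) 1)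
    (u : ℕ → EuclideanSpace ℝ (Fin n)) (uInf : EuclideanSpace ℝ (Fin n))
    (hu : Filter.Tendsto u Filter.atTop (nhds uInf))
    (ε : ℕ → ℝ) (lam : ℕ → EuclideanSpace ℝ (Fin n))
    (hε : ∀ k, ε (k + 1) = (1 - η) * ε k + η * (Gp (u k) - G (u k)))
    (hlam : ∀ k, lam (k + 1) =
      (1 - η) • lam k + η • (gradient Gp (u k) - gradient G (u k))) :
    Filter.Tendsto ε Filter.atTop (nhds (Gp uInf - G uInf)) ∧
    Filter.Tendsto lam Filter.atTop
      (nhds (gradient Gp uInf - gradient G uInf)) := by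
  constructor
  · apply filtered_tendsto η hη (fun k => Gp (u k) - G (u k)) _
      (((hGp.continuous.tendsto uInf).comp hu).sub
        ((hG.continuous.tendsto uInf).comp hu)) ε
    intro k
    simpa [smul_eq_mul] using hε k
  · exact filtered_tendsto η hη (fun k => gradient Gp (u k) - gradient G (u k)) _
      ((((continuous_gradient_of_contDiff Gp hGp).tendsto uInf).comp hu).sub
        (((continuous_gradient_of_contDiff G hG).tendsto uInf).comp hu)) lam hlam
end

section
/- Let E be a finite-dimensional real inner product space, let u ∈ E, Δ > 0, and let m : E → ℝ be continuously differentiable with ∇m Lipschitz continuous with constant κ > 0 on the closed ball B(u; Δ). If d* is a global minimizer of d ↦ m(u + d) over the closed ball {d : ‖d‖ ≤ Δ}, then the exact trust-region step achieves at least the Cauchy decrease: m(u) − m(u + d*) ≥ (1/2) ‖∇m(u)‖ · min( ‖∇m(u)‖ / κ , Δ ). -/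
open Metric Set intervalIntegral

lemma grad_apply {E : Type*} [NormedAddCommGroup E] [InnerProductSpace ℝ E]
    [CompleteSpace E] (m : E → ℝ) (x v : E) :
    fderiv ℝ m x v = inner ℝ (gradient m x) v := by
  unfold gradient
  rw [InnerProductSpace.toDual_symm_apply]

-- descent lemma
lemma descent_lemma {E : Type*} [NormedAddCommGroup E] [InnerProductSpace ℝ E]
    [CompleteSpace E] (u : E) (Δ : ℝ)
    (m : E → ℝ) (hm : ContDiff ℝ 1 m)
    (κ : ℝ) (hκ : 0 < κ)
    (hLip : ∀ x ∈ Metric.closedBall u Δ, ∀ y ∈ Metric.closedBall u Δ,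
      ‖gradient m x - gradient m y‖ ≤ κ * ‖x - y‖)
    (d : E) (hd : ‖d‖ ≤ Δ) :
    m (u + d) ≤ m u + (inner ℝ (gradient m u) d : ℝ) + κ / 2 * ‖d‖ ^ 2 := by
  set ψ : ℝ → ℝ := fun s => m (u + s • d) with hψ
  set ψ' : ℝ → ℝ := fun s => (inner ℝ (gradient m (u + s • d)) d : ℝ) with hψ'
  have hdiff : ∀ s : ℝ, HasDerivAt ψ (ψ' s) s := by
    intro s
    have h1 : HasDerivAt (fun s : ℝ => u + s • d) d s := by
      simpa using ((hasDerivAt_id s).smul_const d).const_add u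
    have h2 : HasFDerivAt m (fderiv ℝ m (u + s • d)) (u + s • d) :=
      ((hm.differentiable one_ne_zero) (u + s • d)).hasFDerivAt
    have := h2.comp_hasDerivAt s h1
    rw [grad_apply] at this; exact this
  have hgradcont : Continuous (gradient m) := by
    have : Continuous (fderiv ℝ m) := hm.continuous_fderiv one_ne_zero
    exact (InnerProductSpace.toDual ℝ E).symm.continuous.comp this
  have hψ'cont : Continuous ψ' :=
    (hgradcont.comp (continuous_const.add (continuous_id.smul continuous_const))).inner
      continuous_const
  have hftc : ∫ s in (0:ℝ)..1, ψ' s = ψ 1 - ψ 0 :=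
    intervalIntegral.integral_eq_sub_of_hasDerivAt (fun s _ => hdiff s)
      (hψ'cont.intervalIntegrable 0 1)
  have hbound : ∀ s ∈ Set.Icc (0:ℝ) 1, ψ' s ≤ ψ' 0 + κ * s * ‖d‖ ^ 2 := by
    intro s hs
    have hmem : u + s • d ∈ Metric.closedBall u Δ := by
      simp only [Metric.mem_closedBall, dist_eq_norm]
      have : ‖u + s • d - u‖ = s * ‖d‖ := by
        rw [add_sub_cancel_left, norm_smul, Real.norm_of_nonneg hs.1]
      rw [this]
      calc s * ‖d‖ ≤ 1 * ‖d‖ := by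
            apply mul_le_mul_of_nonneg_right hs.2 (norm_nonneg d)
        _ ≤ Δ := by simpa using hd
    have hmem0 : u ∈ Metric.closedBall u Δ := by
      simp only [Metric.mem_closedBall, dist_self]
      exact le_trans (norm_nonneg d) hd
    have hl := hLip _ hmem _ hmem0
    have hdiffinner : ψ' s - ψ' 0 = (inner ℝ (gradient m (u + s • d) - gradient m u) d : ℝ) := by
      simp [hψ', inner_sub_left]
    have hcs : ψ' s - ψ' 0 ≤ ‖gradient m (u + s • d) - gradient m u‖ * ‖d‖ := by
      rw [hdiffinner]; exact real_inner_le_norm _ _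
    have hnorm : ‖u + s • d - u‖ = s * ‖d‖ := by
      rw [add_sub_cancel_left, norm_smul, Real.norm_of_nonneg hs.1]
    have : ψ' s - ψ' 0 ≤ κ * (s * ‖d‖) * ‖d‖ := by
      calc ψ' s - ψ' 0 ≤ ‖gradient m (u + s • d) - gradient m u‖ * ‖d‖ := hcs
        _ ≤ κ * ‖u + s • d - u‖ * ‖d‖ :=
            mul_le_mul_of_nonneg_right hl (norm_nonneg d)
        _ = κ * (s * ‖d‖) * ‖d‖ := by rw [hnorm]
    nlinarith [norm_nonneg d]
  have hint : ∫ s in (0:ℝ)..1, ψ' s ≤ ∫ s in (0:ℝ)..1, (ψ' 0 + κ * s * ‖d‖ ^ 2) := by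
    apply intervalIntegral.integral_mono_on (by norm_num)
      (hψ'cont.intervalIntegrable 0 1)
      ((by continuity : Continuous fun s : ℝ => ψ' 0 + κ * s * ‖d‖ ^ 2).intervalIntegrable 0 1)
    exact hbound
  have hrhs : ∫ s in (0:ℝ)..1, (ψ' 0 + κ * s * ‖d‖ ^ 2) = ψ' 0 + κ / 2 * ‖d‖ ^ 2 := by
    have h1 : ∫ s in (0:ℝ)..1, (ψ' 0 + κ * s * ‖d‖ ^ 2)
        = (∫ _ in (0:ℝ)..1, ψ' 0) + ∫ s in (0:ℝ)..1, κ * s * ‖d‖ ^ 2 :=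
      intervalIntegral.integral_add intervalIntegrable_const
        ((by continuity : Continuous fun s : ℝ => κ * s * ‖d‖ ^ 2).intervalIntegrable 0 1)
    have h2 : ∫ s in (0:ℝ)..1, κ * s * ‖d‖ ^ 2 = κ / 2 * ‖d‖ ^ 2 := by
      have e : (fun s : ℝ => κ * s * ‖d‖ ^ 2) = fun s : ℝ => (κ * ‖d‖ ^ 2) * s := by
        ext s; ring
      rw [e, intervalIntegral.integral_const_mul, integral_id]; ring
    rw [h1, h2]; simp
  have hfin : ψ 1 - ψ 0 ≤ ψ' 0 + κ / 2 * ‖d‖ ^ 2 := by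
    rw [← hftc]; rw [hrhs] at hint; exact hint
  have h2 : m (u + d) - m u ≤ (inner ℝ (gradient m u) d : ℝ) + κ / 2 * ‖d‖ ^ 2 := by
    simpa [hψ, hψ'] using hfin
  linarith

/-- Cauchy decrease of the exact trust-region step: if `d*` globally minimizes the
model `m` over the trust region `{d : ‖d‖ ≤ Δ}` around `u`, and `∇m` is
`κ`-Lipschitz on the closed ball `B(u; Δ)`, then
`m(u) − m(u + d*) ≥ (1/2) ‖∇m(u)‖ min(‖∇m(u)‖/κ, Δ)`. -/
theorem exact_trust_region_step_cauchy_decrease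
    {E : Type*} [NormedAddCommGroup E] [InnerProductSpace ℝ E]
    [FiniteDimensional ℝ E]
    (u : E) (Δ : ℝ) (hΔ : 0 < Δ)
    (m : E → ℝ) (hm : ContDiff ℝ 1 m)
    (κ : ℝ) (hκ : 0 < κ)
    (hLip : ∀ x ∈ Metric.closedBall u Δ, ∀ y ∈ Metric.closedBall u Δ,
      ‖gradient m x - gradient m y‖ ≤ κ * ‖x - y‖)
    (dstar : E) (hdstar : ‖dstar‖ ≤ Δ)
    (hmin : ∀ d : E, ‖d‖ ≤ Δ → m (u + dstar) ≤ m (u + d)) :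
    m u - m (u + dstar) ≥
      (1 / 2) * ‖gradient m u‖ * min (‖gradient m u‖ / κ) Δ := by
  set g := gradient m u with hg
  by_cases hg0 : g = 0
  · have h0 : m (u + dstar) ≤ m u := by simpa using hmin 0 (by simpa using le_of_lt hΔ)
    rw [hg0]
    simp only [norm_zero, mul_zero, zero_mul]
    linarith
  · have hgn : 0 < ‖g‖ := norm_pos_iff.mpr hg0
    set t : ℝ := min (1 / κ) (Δ / ‖g‖) with ht
    have ht0 : 0 < t := lt_min (by positivity) (by positivity)
    set d : E := (-t) • g with hd
    have hdn : ‖d‖ = t * ‖g‖ := by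
      rw [hd, norm_smul, Real.norm_eq_abs, abs_neg, abs_of_pos ht0]
    have hdΔ : ‖d‖ ≤ Δ := by
      rw [hdn]
      calc t * ‖g‖ ≤ (Δ / ‖g‖) * ‖g‖ :=
            mul_le_mul_of_nonneg_right (min_le_right _ _) (le_of_lt hgn)
        _ = Δ := by field_simp
    have hdesc := descent_lemma u Δ m hm κ hκ hLip d hdΔ
    have hinner : (inner ℝ g d : ℝ) = -t * ‖g‖ ^ 2 := by
      rw [hd, real_inner_smul_right, real_inner_self_eq_norm_sq]
    have key : m (u + d) ≤ m u - t * ‖g‖ ^ 2 + κ / 2 * (t * ‖g‖) ^ 2 := by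
      rw [← hg] at hdesc
      rw [hinner, hdn] at hdesc
      linarith
    have hstep : m (u + dstar) ≤ m u - t * ‖g‖ ^ 2 + κ / 2 * (t * ‖g‖) ^ 2 :=
      le_trans (hmin d hdΔ) key
    have harith : t * ‖g‖ ^ 2 - κ / 2 * (t * ‖g‖) ^ 2 ≥
        (1 / 2) * ‖g‖ * min (‖g‖ / κ) Δ := by
      rcases le_total (1 / κ) (Δ / ‖g‖) with h | h
      · have htval : t = 1 / κ := min_eq_left h
        have hmn : min (‖g‖ / κ) Δ = ‖g‖ / κ := by
          apply min_eq_left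
          have h' := mul_le_mul_of_nonneg_left h (le_of_lt hgn)
          calc ‖g‖ / κ = ‖g‖ * (1 / κ) := by ring
            _ ≤ ‖g‖ * (Δ / ‖g‖) := h'
            _ = Δ := by field_simp
        have heq : (1 / κ) * ‖g‖ ^ 2 - κ / 2 * ((1 / κ) * ‖g‖) ^ 2
            = (1 / 2) * ‖g‖ * (‖g‖ / κ) := by
          field_simp; ring
        rw [htval, hmn, heq]
      · have htval : t = Δ / ‖g‖ := min_eq_right h
        have hκΔ : κ * Δ ≤ ‖g‖ := by
          rw [div_le_div_iff₀ hgn hκ] at h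
          linarith
        have hmn : min (‖g‖ / κ) Δ = Δ := by
          apply min_eq_right
          rw [le_div_iff₀ hκ]
          linarith
        have hne : ‖g‖ ≠ 0 := ne_of_gt hgn
        have e1 : Δ / ‖g‖ * ‖g‖ ^ 2 - κ / 2 * (Δ / ‖g‖ * ‖g‖) ^ 2
            = Δ * ‖g‖ - κ / 2 * Δ ^ 2 := by
          field_simp
        rw [htval, hmn, e1]
        nlinarith [mul_nonneg (sub_nonneg.mpr hκΔ) hΔ.le]
    linarith
end

section
/- Let E be a finite-dimensional real inner product space, let f, m : E → ℝ, u ∈ E, Δ > 0, κ_ef > 0, κ > 0, η₂ ∈ (0,1), and write g := ‖∇m(u)‖ with g > 0. Let d ∈ E with ‖d‖ ≤ Δ. Assume: (i) the zeroth-order full-linearity bound |f(u + s) − m(u + s)| ≤ κ_ef Δ² holds for all s with ‖s‖ ≤ Δ (in particular for s = 0 and s = d); (ii) the step achieves the Cauchy decrease m(u) − m(u + d) ≥ (1/2) g min(g/κ, Δ); and (iii) Δ ≤ min( g/κ , g (1 − η₂)/(4 κ_ef) ). Then the accuracy ratio ρ := (f(u) − f(u + d)) / (m(u) − m(u + d))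 is well defined (the denominator is positive) and satisfies ρ ≥ η₂; that is, the trust-region iteration is successful. -/
/-- If the model is zeroth-order fully linear on the trust region, the step achieves the
Cauchy decrease, and the trust-region radius is sufficiently small compared to the model
gradient norm, then the accuracy ratio is well defined and the iteration is successful
(`ρ ≥ η₂`). -/
theorem small_trust_region_iteration_successful
    {E : Type*} [NormedAddCommGroup E] [InnerProductSpace ℝ E]
    [FiniteDimensional ℝ E]
    (f m : E → ℝ) (u : E) (Δ κef κ η₂ : ℝ)
    (hΔ : 0 < Δ) (hκef : 0 < κef) (hκ : 0 < κ)
    (hη₂ : η₂ ∈ Set.Ioo (0 : ℝ) 1)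
    (g : ℝ) (hg : g = ‖gradient m u‖) (hgpos : 0 < g)
    (d : E) (hd : ‖d‖ ≤ Δ)
    (hfl : ∀ s : E, ‖s‖ ≤ Δ → |f (u + s) - m (u + s)| ≤ κef * Δ ^ 2)
    (hcauchy : m u - m (u + d) ≥ (1 / 2) * g * min (g / κ) Δ)
    (hΔsmall : Δ ≤ min (g / κ) (g * (1 - η₂) / (4 * κef))) :
    0 < m u - m (u + d) ∧
      (f u - f (u + d)) / (m u - m (u + d)) ≥ η₂ := by
  obtain ⟨hη₂0, hη₂1⟩ := hη₂
  have hΔ1 : Δ ≤ g / κ := le_trans hΔsmall (min_le_left _ _)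
  have hΔ2 : Δ ≤ g * (1 - η₂) / (4 * κef) := le_trans hΔsmall (min_le_right _ _)
  have hmin : min (g / κ) Δ = Δ := min_eq_right hΔ1
  have hD : m u - m (u + d) ≥ (1 / 2) * g * Δ := by rwa [hmin] at hcauchy
  have hDpos : 0 < m u - m (u + d) :=
    lt_of_lt_of_le (by positivity) hD
  refine ⟨hDpos, ?_⟩
  rw [ge_iff_le, le_div_iff₀ hDpos]
  -- bounds from full linearity
  have h0 : |f (u + 0) - m (u + 0)| ≤ κef * Δ ^ 2 := hfl 0 (by simp [le_of_lt hΔ])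
  have hdd : |f (u + d) - m (u + d)| ≤ κef * Δ ^ 2 := hfl d hd
  rw [add_zero] at h0
  have h0' := abs_le.mp h0
  have hdd' := abs_le.mp hdd
  -- key: (1 - η₂) * D ≥ 2 κef Δ²
  have hkey : 2 * (κef * Δ ^ 2) ≤ (1 - η₂) * (m u - m (u + d)) := by
    have h1 : 2 * (κef * Δ ^ 2) ≤ (1 - η₂) * ((1 / 2) * g * Δ) := by
      have : Δ * (4 * κef) ≤ g * (1 - η₂) :=
        (le_div_iff₀ (by positivity)).mp hΔ2
      nlinarith
    refine le_trans h1 ?_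
    have : (0:ℝ) ≤ 1 - η₂ := by linarith
    nlinarith
  nlinarith [h0'.1, h0'.2, hdd'.1, hdd'.2]
end

section
/- Consider the trust-region modifier-adaptation iteration for an unconstrained problem with noiseless measurements. Let E be a finite-dimensional real inner product space and f : E → ℝ be continuously differentiable with ∇f Lipschitz continuous with constant L > 0 on E and f bounded from below on E. Fix constants 0 < η₁ < η₂ < 1, 0 < γ_red < 1 < γ_inc, μ > 0, Δ_max > 0, κ_ef > 0, κ_eg > 0, κ_bhm > 0. Let (u_k) in E, (Δ_k) with 0 < Δ_k ≤ Δ_max, models m_k : E → ℝ continuously differentiable with ∇m_k Lipschitz with constant κ_bhm, and steps d_k ∈ E satisfy, for every k: (i) full linearity of m_k for f on B(u_k; Δ_k): for all d with ‖d‖ ≤ Δ_k, ‖∇f(u_k + d) − ∇m_k(u_k + d)‖ ≤ κ_eg Δ_k and |f(u_k + d) − m_k(u_k + d)| ≤ κ_ef Δ_k²; (ii) the criticality condition Δ_k ≤ μ ‖∇m_k(u_k)‖; (iii) d_k is a global minimizer of d ↦ m_k(u_k + d) over the closed ball {d : ‖d‖ ≤ Δ_k}; (iv) with ρ_k := (f(u_k)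 − f(u_k + d_k)) / (m_k(u_k) − m_k(u_k + d_k)), the updates u_{k+1} = u_k + d_k if ρ_k ≥ η₁ and u_{k+1} = u_k otherwise, and Δ_{k+1} = min(γ_inc Δ_k, Δ_max) if ρ_k > η₂ and ‖d_k‖ = Δ_k, Δ_{k+1} = γ_red Δ_k if ρ_k < η₁, and Δ_{k+1} = Δ_k otherwise. Then lim inf_{k→∞} ‖∇f(u_k)‖ = 0; that is, some subsequence of the iterates is asymptotically first-order critical. -/
open InnerProductSpace Filter

/-- Quadratic upper bound (descent lemma) for a `C¹` function with Lipschitz gradient. -/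
lemma quad_bound_aux {E : Type*} [NormedAddCommGroup E] [InnerProductSpace ℝ E] [CompleteSpace E]
    (h : E → ℝ) (hh : ContDiff ℝ 1 h) (K : ℝ) (hK : 0 ≤ K)
    (hLip : ∀ x y, ‖gradient h x - gradient h y‖ ≤ K * ‖x - y‖)
    (x s : E) :
    h (x + s) ≤ h x + inner ℝ (gradient h x) s + K * ‖s‖ ^ 2 := by
  have hdiff : Differentiable ℝ h := hh.differentiable one_ne_zero
  have hfd : ∀ z : E, fderiv ℝ h z = toDual ℝ E (gradient h z) := fun z =>
    ((hdiff z).hasGradientAt.hasFDerivAt).fderiv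
  have key := (convex_closedBall x ‖s‖).norm_image_sub_le_of_norm_fderiv_le'
    (f := h) (φ := fderiv ℝ h x) (C := K * ‖s‖) (x := x) (y := x + s)
    (fun z _ => hdiff z)
    (fun z hz => by
      rw [hfd z, hfd x, ← LinearIsometryEquiv.map_sub, LinearIsometryEquiv.norm_map]
      have h1 : ‖z - x‖ ≤ ‖s‖ := by
        rw [← dist_eq_norm]; exact Metric.mem_closedBall.mp hz
      calc ‖gradient h z - gradient h x‖ ≤ K * ‖z - x‖ := hLip z x
        _ ≤ K * ‖s‖ := by nlinarith)
    (Metric.mem_closedBall_self (norm_nonneg s))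
    (by simp [Metric.mem_closedBall, dist_eq_norm])
  rw [hfd x] at key
  simp only [add_sub_cancel_left] at key
  have happ : (toDual ℝ E (gradient h x)) s = inner ℝ (gradient h x) s := rfl
  rw [happ] at key
  have := abs_le.mp (by rwa [Real.norm_eq_abs] at key)
  nlinarith [this.2]

set_option maxHeartbeats 1000000

/-- Global convergence (liminf version) of the trust-region modifier-adaptation iteration
for an unconstrained problem with noiseless measurements: under full linearity of the
models, the criticality condition, exact global solution of the trust-region subproblems,
and the standard trust-region acceptance/radius-update rules, some subsequence of the
iterates is asymptotically first-order critical. -/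
theorem trust_region_MA_liminf_convergence
    {E : Type*} [NormedAddCommGroup E] [InnerProductSpace ℝ E]
    [FiniteDimensional ℝ E]
    (f : E → ℝ) (hf : ContDiff ℝ 1 f)
    (L : ℝ) (hL : 0 < L)
    (hfLip : ∀ x y : E, ‖gradient f x - gradient f y‖ ≤ L * ‖x - y‖)
    (hfbdd : BddBelow (Set.range f))
    (η₁ η₂ γred γinc μ Δmax κef κeg κbhm : ℝ)
    (hη₁ : 0 < η₁) (hη₁₂ : η₁ < η₂) (hη₂ : η₂ < 1)
    (hγred : 0 < γred) (hγred1 : γred < 1) (hγinc : 1 < γinc)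
    (hμ : 0 < μ) (hΔmax : 0 < Δmax)
    (hκef : 0 < κef) (hκeg : 0 < κeg) (hκbhm : 0 < κbhm)
    (u : ℕ → E) (Δ : ℕ → ℝ) (m : ℕ → E → ℝ) (d : ℕ → E) (ρ : ℕ → ℝ)
    (hΔpos : ∀ k, 0 < Δ k) (hΔle : ∀ k, Δ k ≤ Δmax)
    (hm : ∀ k, ContDiff ℝ 1 (m k))
    (hmLip : ∀ k, ∀ x y : E,
      ‖gradient (m k) x - gradient (m k) y‖ ≤ κbhm * ‖x - y‖)
    (hfl_g : ∀ k, ∀ s : E, ‖s‖ ≤ Δ k →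
      ‖gradient f (u k + s) - gradient (m k) (u k + s)‖ ≤ κeg * Δ k)
    (hfl_f : ∀ k, ∀ s : E, ‖s‖ ≤ Δ k →
      |f (u k + s) - m k (u k + s)| ≤ κef * Δ k ^ 2)
    (hcrit : ∀ k, Δ k ≤ μ * ‖gradient (m k) (u k)‖)
    (hdle : ∀ k, ‖d k‖ ≤ Δ k)
    (hdmin : ∀ k, ∀ s : E, ‖s‖ ≤ Δ k → m k (u k + d k) ≤ m k (u k + s))
    (hρ : ∀ k, ρ k =
      (f (u k) - f (u k + d k)) / (m k (u k) - m k (u k + d k)))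
    (hu_acc : ∀ k, η₁ ≤ ρ k → u (k + 1) = u k + d k)
    (hu_rej : ∀ k, ρ k < η₁ → u (k + 1) = u k)
    (hΔ_inc : ∀ k, η₂ < ρ k ∧ ‖d k‖ = Δ k →
      Δ (k + 1) = min (γinc * Δ k) Δmax)
    (hΔ_red : ∀ k, ρ k < η₁ → Δ (k + 1) = γred * Δ k)
    (hΔ_keep : ∀ k, ¬(η₂ < ρ k ∧ ‖d k‖ = Δ k) → ¬(ρ k < η₁) →
      Δ (k + 1) = Δ k) :
    Filter.liminf (fun k => ‖gradient f (u k)‖) Filter.atTop = 0 := by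
  classical
  -- model gradients are nonzero
  have hgpos : ∀ k, 0 < ‖gradient (m k) (u k)‖ := by
    intro k
    by_contra hc
    push_neg at hc
    nlinarith [hcrit k, hΔpos k, norm_nonneg (gradient (m k) (u k))]
  -- Cauchy decrease along the steepest descent direction
  have hCauchy : ∀ k, ∀ t : ℝ, 0 ≤ t → t ≤ Δ k →
      t * ‖gradient (m k) (u k)‖ - κbhm * t ^ 2 ≤ m k (u k) - m k (u k + d k) := by
    intro k t ht htΔ
    have hGpos := hgpos k
    set G := gradient (m k) (u k) with hG
    set s : E := -((t / ‖G‖) • G) with hs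
    have hns : ‖s‖ = t := by
      rw [hs, norm_neg, norm_smul, Real.norm_eq_abs,
        abs_of_nonneg (div_nonneg ht hGpos.le), div_mul_cancel₀ _ (ne_of_gt hGpos)]
    have h1 : m k (u k + d k) ≤ m k (u k + s) := hdmin k s (by rw [hns]; exact htΔ)
    have h2 : m k (u k + s) ≤ m k (u k) + inner ℝ G s + κbhm * ‖s‖ ^ 2 :=
      quad_bound_aux (m k) (hm k) κbhm hκbhm.le (hmLip k) (u k) s
    have h3 : (inner ℝ G s : ℝ) = -(t * ‖G‖) := by
      rw [hs, inner_neg_right, real_inner_smul_right, real_inner_self_eq_norm_sq]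
      field_simp
    rw [hns, h3] at h2
    linarith
  -- uniform model decrease lower bound
  have hmdec : ∀ k, ∀ c : ℝ, 0 ≤ c → c ≤ ‖gradient (m k) (u k)‖ →
      c * min (Δ k) (c / (2 * κbhm)) / 2 ≤ m k (u k) - m k (u k + d k) := by
    intro k c hc hcg
    set t := min (Δ k) (c / (2 * κbhm)) with hT
    have ht0 : 0 ≤ t := le_min (hΔpos k).le (div_nonneg hc (by positivity))
    have htΔ : t ≤ Δ k := min_le_left _ _
    have ht2 : t ≤ c / (2 * κbhm) := min_le_right _ _
    have hkey := hCauchy k t ht0 htΔ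
    have hfs : κbhm * (c / (2 * κbhm)) = c / 2 := by field_simp
    nlinarith [mul_le_mul_of_nonneg_left hcg ht0,
      mul_le_mul_of_nonneg_left ht2 (mul_nonneg hκbhm.le ht0)]
  have mdecpos : ∀ k, 0 < m k (u k) - m k (u k + d k) := by
    intro k
    have h := hmdec k ‖gradient (m k) (u k)‖ (norm_nonneg _) le_rfl
    have hmin : 0 < min (Δ k) (‖gradient (m k) (u k)‖ / (2 * κbhm)) :=
      lt_min (hΔpos k) (div_pos (hgpos k) (by positivity))
    nlinarith [hgpos k]
  have hfdec_eq : ∀ k, f (u k) - f (u k + d k) = ρ k * (m k (u k) - m k (u k + d k)) := by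
    intro k
    rw [hρ k, div_mul_cancel₀ _ (ne_of_gt (mdecpos k))]
  have hfm : ∀ k,
      |(f (u k) - f (u k + d k)) - (m k (u k) - m k (u k + d k))| ≤ 2 * κef * Δ k ^ 2 := by
    intro k
    have h0 := hfl_f k 0 (by simpa using (hΔpos k).le)
    have hd := hfl_f k (d k) (hdle k)
    rw [add_zero] at h0
    have h0' := abs_le.mp h0
    have hd' := abs_le.mp hd
    rw [abs_le]
    constructor <;> nlinarith
  have hstep : ∀ k, f (u (k + 1)) ≤ f (u k) := by
    intro k
    by_cases hc : ρ k < η₁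
    · rw [hu_rej k hc]
    · push_neg at hc
      rw [hu_acc k hc]
      have := hfdec_eq k
      nlinarith [mdecpos k]
  have hmono : Antitone fun k => f (u k) := antitone_nat_of_succ_le hstep
  -- core claim: gradients get frequently small
  have hfreq : ∀ ε : ℝ, 0 < ε → ∀ N : ℕ, ∃ k, N ≤ k ∧ ‖gradient f (u k)‖ < ε := by
    by_contra hcon
    push_neg at hcon
    obtain ⟨ε, hε, N, hN⟩ := hcon
    -- uniform lower bound on model gradients
    set c₁ := min (ε / 2) (ε / (2 * κeg * μ)) with hc₁def
    have hc₁ : 0 < c₁ := lt_min (by positivity) (by positivity)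
    have hgc : ∀ k, N ≤ k → c₁ ≤ ‖gradient (m k) (u k)‖ := by
      intro k hk
      by_cases hΔc : Δ k ≤ ε / (2 * κeg)
      · have h0 := hfl_g k 0 (by simpa using (hΔpos k).le)
        rw [add_zero] at h0
        have htri : ‖gradient f (u k)‖ - ‖gradient (m k) (u k)‖ ≤
            ‖gradient f (u k) - gradient (m k) (u k)‖ := norm_sub_norm_le _ _
        have hb : κeg * Δ k ≤ ε / 2 := by
          have : κeg * (ε / (2 * κeg)) = ε / 2 := by field_simp
          nlinarith
        have hNk := hN k hk
        calc c₁ ≤ ε / 2 := min_le_left _ _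
          _ ≤ ‖gradient (m k) (u k)‖ := by linarith
      · push_neg at hΔc
        have hcr := hcrit k
        calc c₁ ≤ ε / (2 * κeg * μ) := min_le_right _ _
          _ ≤ ‖gradient (m k) (u k)‖ := by
            rw [div_le_iff₀ (by positivity)]
            have h' := (div_lt_iff₀ (by positivity)).mp (lt_of_lt_of_le hΔc hcr)
            nlinarith
    set τ := min (c₁ / (2 * κbhm)) ((1 - η₂) * c₁ / (8 * κef)) with hτdef
    have hτ : 0 < τ :=
      lt_min (by positivity) (div_pos (mul_pos (by linarith) hc₁) (by positivity))
    -- small radius forces a very successful step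
    have hsucc : ∀ k, N ≤ k → Δ k ≤ τ → η₂ < ρ k := by
      intro k hk hΔτ
      have hmd : c₁ * Δ k / 2 ≤ m k (u k) - m k (u k + d k) := by
        have h := hmdec k c₁ hc₁.le (hgc k hk)
        have hmin : min (Δ k) (c₁ / (2 * κbhm)) = Δ k :=
          min_eq_left (le_trans hΔτ (min_le_left _ _))
        rwa [hmin] at h
      have habs := abs_le.mp (hfm k)
      have hfd := hfdec_eq k
      by_contra hcρ
      push_neg at hcρ
      have hΔ2 : Δ k ≤ (1 - η₂) * c₁ / (8 * κef) := le_trans hΔτ (min_le_right _ _)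
      have hΔ2' : Δ k * (8 * κef) ≤ (1 - η₂) * c₁ := (le_div_iff₀ (by positivity)).mp hΔ2
      have hM := mdecpos k
      have s1 : (1 - η₂) * (m k (u k) - m k (u k + d k)) ≤
          (m k (u k) - m k (u k + d k)) - (f (u k) - f (u k + d k)) := by
        have := mul_nonneg (show (0:ℝ) ≤ η₂ - ρ k by linarith)
          (show (0:ℝ) ≤ m k (u k) - m k (u k + d k) from hM.le)
        nlinarith [hfd]
      have s2 : (1 - η₂) * (c₁ * Δ k / 2) ≤ (1 - η₂) * (m k (u k) - m k (u k + d k)) :=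
        mul_le_mul_of_nonneg_left hmd (by linarith)
      have s3 : (m k (u k) - m k (u k + d k)) - (f (u k) - f (u k + d k)) ≤
          2 * κef * Δ k ^ 2 := by linarith [habs.1]
      have s4 : 8 * κef * Δ k ^ 2 ≤ (1 - η₂) * c₁ * Δ k := by
        have := mul_le_mul_of_nonneg_right hΔ2' (hΔpos k).le
        nlinarith
      have s5 : 0 < (1 - η₂) * c₁ * Δ k :=
        mul_pos (mul_pos (by linarith) hc₁) (hΔpos k)
      nlinarith [s1, s2, s3, s4, s5]
    -- the radius stays bounded away from zero
    set Δlo := min (Δ N) (γred * τ) with hΔlodef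
    have hΔlo : 0 < Δlo := lt_min (hΔpos N) (mul_pos hγred hτ)
    have hΔge : ∀ k, N ≤ k → Δlo ≤ Δ k := by
      intro k hk
      induction k, hk using Nat.le_induction with
      | base => exact min_le_left _ _
      | succ k hk ih =>
        by_cases hc : η₂ < ρ k ∧ ‖d k‖ = Δ k
        · rw [hΔ_inc k hc]
          have h1 : Δ k ≤ γinc * Δ k := by nlinarith [hΔpos k]
          exact ih.trans (le_min h1 (hΔle k))
        · by_cases hr : ρ k < η₁
          · rw [hΔ_red k hr]
            have hτΔ : τ < Δ k := by
              by_contra hle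
              push_neg at hle
              exact absurd (hsucc k hk hle) (by linarith)
            calc Δlo ≤ γred * τ := min_le_right _ _
              _ ≤ γred * Δ k := by nlinarith
          · rw [hΔ_keep k hc hr]; exact ih
    -- uniform decrease on successful steps
    set c₂ := c₁ * min Δlo (c₁ / (2 * κbhm)) / 2 with hc₂def
    have hminpos : 0 < min Δlo (c₁ / (2 * κbhm)) := lt_min hΔlo (by positivity)
    have hc₂ : 0 < c₂ := div_pos (mul_pos hc₁ hminpos) (by norm_num)
    have hmdecN : ∀ k, N ≤ k → c₂ ≤ m k (u k) - m k (u k + d k) := by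
      intro k hk
      have h := hmdec k c₁ hc₁.le (hgc k hk)
      have hminle : min Δlo (c₁ / (2 * κbhm)) ≤ min (Δ k) (c₁ / (2 * κbhm)) :=
        min_le_min (hΔge k hk) le_rfl
      calc c₂ = c₁ * min Δlo (c₁ / (2 * κbhm)) / 2 := rfl
        _ ≤ c₁ * min (Δ k) (c₁ / (2 * κbhm)) / 2 := by nlinarith
        _ ≤ _ := h
    -- there are infinitely many successful iterations
    have hinf : ∀ M : ℕ, ∃ k, M ≤ k ∧ η₁ ≤ ρ k := by
      intro M
      by_contra hcon2
      push_neg at hcon2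
      set M' := max M N with hM'def
      have hfail : ∀ j : ℕ, ρ (M' + j) < η₁ := fun j =>
        hcon2 _ (le_trans (le_max_left _ _) (Nat.le_add_right _ _))
      have hpow : ∀ j : ℕ, Δ (M' + j) = γred ^ j * Δ M' := by
        intro j
        induction j with
        | zero => simp
        | succ j ih =>
          have hstep' : Δ (M' + j + 1) = γred * Δ (M' + j) := hΔ_red _ (hfail j)
          rw [show M' + (j + 1) = M' + j + 1 from rfl, hstep', ih]
          ring
      obtain ⟨j, hj⟩ := exists_pow_lt_of_lt_one
        (show (0 : ℝ) < Δlo / Δ M' from div_pos hΔlo (hΔpos M')) hγred1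
      have h1 : Δ (M' + j) < Δlo := by
        rw [hpow j]
        calc γred ^ j * Δ M' < (Δlo / Δ M') * Δ M' :=
              mul_lt_mul_of_pos_right hj (hΔpos M')
          _ = Δlo := div_mul_cancel₀ _ (ne_of_gt (hΔpos M'))
      exact absurd (hΔge (M' + j) (le_trans (le_max_right _ _) (Nat.le_add_right _ _)))
        (by linarith)
    choose φ hφ1 hφ2 using hinf
    set K : ℕ → ℕ := fun j => Nat.rec (φ N) (fun _ kj => φ (kj + 1)) j with hKdef
    have hKs : ∀ j, K (j + 1) = φ (K j + 1) := fun j => rfl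
    have hKN : ∀ j, N ≤ K j := by
      intro j
      induction j with
      | zero => exact hφ1 N
      | succ j ih => exact le_trans (le_trans ih (Nat.le_succ _)) (hφ1 (K j + 1))
    have hKρ : ∀ j, η₁ ≤ ρ (K j) := by
      intro j
      cases j with
      | zero => exact hφ2 N
      | succ j => exact hφ2 (K j + 1)
    have hKmono : ∀ j, K j + 1 ≤ K (j + 1) := fun j => hφ1 (K j + 1)
    set δ := η₁ * c₂ with hδdef
    have hδ : 0 < δ := mul_pos hη₁ hc₂
    have hdrop : ∀ j, f (u (K (j + 1))) ≤ f (u (K j)) - δ := by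
      intro j
      have hs' : f (u (K j + 1)) ≤ f (u (K j)) - δ := by
        rw [hu_acc (K j) (hKρ j)]
        have he := hfdec_eq (K j)
        have hmd := hmdecN (K j) (hKN j)
        nlinarith [hKρ j, hc₂, mdecpos (K j)]
      exact le_trans (hmono (hKmono j)) hs'
    have hlin : ∀ j : ℕ, f (u (K j)) ≤ f (u (K 0)) - (j : ℝ) * δ := by
      intro j
      induction j with
      | zero => simp
      | succ j ih =>
        have := hdrop j
        push_cast
        nlinarith
    obtain ⟨b, hb⟩ := hfbdd
    have hbf : ∀ x, b ≤ f x := fun x => hb ⟨x, rfl⟩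
    obtain ⟨n, hn⟩ := exists_nat_gt ((f (u (K 0)) - b) / δ)
    have hn' : f (u (K 0)) - b < (n : ℝ) * δ := (div_lt_iff₀ hδ).mp hn
    have h1 := hlin n
    have h2 := hbf (u (K n))
    linarith
  -- conclude the liminf is zero
  have hnn : ∀ k, (0 : ℝ) ≤ ‖gradient f (u k)‖ := fun k => norm_nonneg _
  apply le_antisymm
  · refine le_of_forall_pos_le_add fun ε hε => ?_
    have hfr : ∃ᶠ k in atTop, ‖gradient f (u k)‖ ≤ ε := by
      rw [Filter.frequently_atTop]
      intro N
      obtain ⟨k, hk1, hk2⟩ := hfreq ε hε N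
      exact ⟨k, hk1, hk2.le⟩
    have hbd : IsBoundedUnder (· ≥ ·) atTop fun k => ‖gradient f (u k)‖ :=
      Filter.isBoundedUnder_of ⟨0, fun k => hnn k⟩
    have := Filter.liminf_le_of_frequently_le hfr hbd
    linarith
  · apply Filter.le_liminf_of_le
    · refine ⟨1, fun a ha => ?_⟩
      have hfr : ∃ᶠ k in atTop, ‖gradient f (u k)‖ < 1 := by
        rw [Filter.frequently_atTop]
        intro N
        obtain ⟨k, hk1, hk2⟩ := hfreq 1 one_pos N
        exact ⟨k, hk1, hk2⟩
      rw [Filter.eventually_map] at ha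
      obtain ⟨k, hk⟩ := (ha.and_frequently hfr).exists
      linarith [hk.1, hk.2]
    · exact Eventually.of_forall hnn
end

section
/- Consider the trust-region modifier-adaptation iteration for an unconstrained problem with noiseless measurements. Let E be a finite-dimensional real inner product space and f : E → ℝ be continuously differentiable with ∇f Lipschitz continuous with constant L > 0 on E and f bounded from below on E. Fix constants 0 < η₁ < η₂ < 1, 0 < γ_red < 1 < γ_inc, μ > 0, Δ_max > 0, κ_ef > 0, κ_eg > 0, κ_bhm > 0. Let (u_k) in E, (Δ_k) with 0 < Δ_k ≤ Δ_max, models m_k : E → ℝ continuously differentiable with ∇m_k Lipschitz with constant κ_bhm, and steps d_k ∈ E satisfy, for every k: (i) full linearity of m_k for f on B(u_k; Δ_k): for all d with ‖d‖ ≤ Δ_k, ‖∇f(u_k + d) − ∇m_k(u_k + d)‖ ≤ κ_eg Δ_k and |f(u_k + d) − m_k(u_k + d)| ≤ κ_ef Δ_k²; (ii) the criticality condition Δ_k ≤ μ ‖∇m_k(u_k)‖; (iii) d_k is a global minimizer of d ↦ m_k(u_k + d) over the closed ball {d : ‖d‖ ≤ Δ_k}; (iv) with ρ_k := (f(u_k)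 − f(u_k + d_k)) / (m_k(u_k) − m_k(u_k + d_k)), the updates u_{k+1} = u_k + d_k if ρ_k ≥ η₁ and u_{k+1} = u_k otherwise, and Δ_{k+1} = min(γ_inc Δ_k, Δ_max) if ρ_k > η₂ and ‖d_k‖ = Δ_k, Δ_{k+1} = γ_red Δ_k if ρ_k < η₁, and Δ_{k+1} = Δ_k otherwise. Then the iterates are globally convergent to first-order criticality: lim_{k→∞} ‖∇f(u_k)‖ = 0. -/
open InnerProductSpace Filter

lemma descent_lemma_s9
    {E : Type*} [NormedAddCommGroup E] [InnerProductSpace ℝ E] [FiniteDimensional ℝ E]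
    (h : E → ℝ) (hh : ContDiff ℝ 1 h) (C : ℝ) (hC : 0 ≤ C)
    (hlip : ∀ x y : E, ‖gradient h x - gradient h y‖ ≤ C * ‖x - y‖)
    (x s : E) :
    h (x + s) ≤ h x + inner ℝ (gradient h x) s + C * ‖s‖ ^ 2 := by
  set g₀ : E := gradient h x with hg₀
  set φ : E → ℝ := fun y => h y - inner ℝ g₀ y with hφ
  have hdiff : Differentiable ℝ h := hh.differentiable one_ne_zero
  have hgradfd : ∀ y : E, (toDual ℝ E) (gradient h y) = fderiv ℝ h y := by
    intro y
    rw [gradient, (toDual ℝ E).apply_symm_apply]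
  have hD : ∀ y : E, HasFDerivAt φ (fderiv ℝ h y - (toDual ℝ E) g₀) y := by
    intro y
    have h1 : HasFDerivAt h (fderiv ℝ h y) y := (hdiff y).hasFDerivAt
    have h2 : HasFDerivAt (fun y : E => (inner ℝ g₀ y : ℝ)) ((toDual ℝ E) g₀) y := by
      have := (innerSL ℝ g₀).hasFDerivAt (x := y)
      convert this using 2
      · simp
      · ext z; simp
    exact h1.sub h2
  have hnorm : ∀ y : E, ‖fderiv ℝ h y - (toDual ℝ E) g₀‖ ≤ C * ‖y - x‖ := by
    intro y
    have heq : fderiv ℝ h y - (toDual ℝ E) g₀ = (toDual ℝ E) (gradient h y - g₀) := by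
      rw [map_sub]
      congr 1
      exact (hgradfd y).symm
    rw [heq, (toDual ℝ E).norm_map]
    exact hlip y x
  have hball : ∀ y ∈ Metric.closedBall x ‖s‖, ‖fderiv ℝ h y - (toDual ℝ E) g₀‖ ≤ C * ‖s‖ := by
    intro y hy
    calc ‖fderiv ℝ h y - (toDual ℝ E) g₀‖ ≤ C * ‖y - x‖ := hnorm y
      _ ≤ C * ‖s‖ := by
          have := Metric.mem_closedBall.1 hy
          rw [dist_eq_norm] at this
          exact mul_le_mul_of_nonneg_left this hC
  have key : ‖φ (x + s) - φ x‖ ≤ (C * ‖s‖) * ‖(x + s) - x‖ :=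
    Convex.norm_image_sub_le_of_norm_hasFDerivWithin_le
      (f' := fun y => fderiv ℝ h y - (toDual ℝ E) g₀)
      (fun y _ => (hD y).hasFDerivWithinAt) hball (convex_closedBall x ‖s‖)
      (Metric.mem_closedBall_self (norm_nonneg s))
      (by simp [Metric.mem_closedBall, dist_eq_norm])
  have hsimp : φ (x + s) - φ x = h (x + s) - h x - inner ℝ g₀ s := by
    simp only [hφ, inner_add_right]
    ring
  have h3 := (abs_le.1 (by rwa [Real.norm_eq_abs] at key)).2
  rw [hsimp] at h3
  have h2 : ‖(x + s) - x‖ = ‖s‖ := by congr 1; abel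
  rw [h2] at h3
  nlinarith [h3]

set_option maxHeartbeats 1000000

/-- Global convergence (lim version) of the trust-region modifier-adaptation iteration
for an unconstrained problem with noiseless measurements: under full linearity of the
models, the criticality condition, exact global solution of the trust-region subproblems,
and the standard trust-region acceptance/radius-update rules, the full sequence of
iterates is globally convergent to first-order criticality. -/
theorem trust_region_MA_global_convergence
    {E : Type*} [NormedAddCommGroup E] [InnerProductSpace ℝ E]
    [FiniteDimensional ℝ E]
    (f : E → ℝ) (hf : ContDiff ℝ 1 f)
    (L : ℝ) (hL : 0 < L)
    (hfLip : ∀ x y : E, ‖gradient f x - gradient f y‖ ≤ L * ‖x - y‖)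
    (hfbdd : BddBelow (Set.range f))
    (η₁ η₂ γred γinc μ Δmax κef κeg κbhm : ℝ)
    (hη₁ : 0 < η₁) (hη₁₂ : η₁ < η₂) (hη₂ : η₂ < 1)
    (hγred : 0 < γred) (hγred1 : γred < 1) (hγinc : 1 < γinc)
    (hμ : 0 < μ) (hΔmax : 0 < Δmax)
    (hκef : 0 < κef) (hκeg : 0 < κeg) (hκbhm : 0 < κbhm)
    (u : ℕ → E) (Δ : ℕ → ℝ) (m : ℕ → E → ℝ) (d : ℕ → E) (ρ : ℕ → ℝ)
    (hΔpos : ∀ k, 0 < Δ k) (hΔle : ∀ k, Δ k ≤ Δmax)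
    (hm : ∀ k, ContDiff ℝ 1 (m k))
    (hmLip : ∀ k, ∀ x y : E,
      ‖gradient (m k) x - gradient (m k) y‖ ≤ κbhm * ‖x - y‖)
    (hfl_g : ∀ k, ∀ s : E, ‖s‖ ≤ Δ k →
      ‖gradient f (u k + s) - gradient (m k) (u k + s)‖ ≤ κeg * Δ k)
    (hfl_f : ∀ k, ∀ s : E, ‖s‖ ≤ Δ k →
      |f (u k + s) - m k (u k + s)| ≤ κef * Δ k ^ 2)
    (hcrit : ∀ k, Δ k ≤ μ * ‖gradient (m k) (u k)‖)
    (hdle : ∀ k, ‖d k‖ ≤ Δ k)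
    (hdmin : ∀ k, ∀ s : E, ‖s‖ ≤ Δ k → m k (u k + d k) ≤ m k (u k + s))
    (hρ : ∀ k, ρ k =
      (f (u k) - f (u k + d k)) / (m k (u k) - m k (u k + d k)))
    (hu_acc : ∀ k, η₁ ≤ ρ k → u (k + 1) = u k + d k)
    (hu_rej : ∀ k, ρ k < η₁ → u (k + 1) = u k)
    (hΔ_inc : ∀ k, η₂ < ρ k ∧ ‖d k‖ = Δ k →
      Δ (k + 1) = min (γinc * Δ k) Δmax)
    (hΔ_red : ∀ k, ρ k < η₁ → Δ (k + 1) = γred * Δ k)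
    (hΔ_keep : ∀ k, ¬(η₂ < ρ k ∧ ‖d k‖ = Δ k) → ¬(ρ k < η₁) →
      Δ (k + 1) = Δ k) :
    Filter.Tendsto (fun k => ‖gradient f (u k)‖) Filter.atTop (nhds 0) := by
  have hγinc0 : (0:ℝ) < γinc := lt_trans one_pos hγinc
  have h1η : (0:ℝ) < 1 - η₁ := by linarith
  -- gradient lower bound from criticality
  have hgnorm : ∀ k, Δ k / μ ≤ ‖gradient (m k) (u k)‖ := by
    intro k
    rw [div_le_iff₀ hμ]
    nlinarith [hcrit k]
  have hgpos : ∀ k, 0 < ‖gradient (m k) (u k)‖ := fun k =>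
    lt_of_lt_of_le (div_pos (hΔpos k) hμ) (hgnorm k)
  -- Cauchy decrease
  have hCauchy : ∀ k, ∀ t : ℝ, 0 ≤ t → t ≤ Δ k → t ≤ ‖gradient (m k) (u k)‖ / (2 * κbhm) →
      t * ‖gradient (m k) (u k)‖ / 2 ≤ m k (u k) - m k (u k + d k) := by
    intro k t ht htΔ htg
    set s : E := -((t / ‖gradient (m k) (u k)‖) • gradient (m k) (u k)) with hs
    have hgne : ‖gradient (m k) (u k)‖ ≠ 0 := ne_of_gt (hgpos k)
    have hns : ‖s‖ = t := by
      rw [hs, norm_neg, norm_smul, Real.norm_eq_abs,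
        abs_of_nonneg (div_nonneg ht (norm_nonneg _))]
      exact div_mul_cancel₀ t hgne
    have hdesc := descent_lemma_s9 (m k) (hm k) κbhm hκbhm.le (hmLip k) (u k) s
    have hinner : (inner ℝ (gradient (m k) (u k)) s : ℝ) = -(t * ‖gradient (m k) (u k)‖) := by
      rw [hs, inner_neg_right, real_inner_smul_right, real_inner_self_eq_norm_sq]
      rw [neg_inj, sq, ← mul_assoc, div_mul_cancel₀ t hgne]
    have h1 : m k (u k + d k) ≤ m k (u k + s) := hdmin k s (by rw [hns]; exact htΔ)
    have h2 : κbhm * ‖s‖ ^ 2 ≤ t * ‖gradient (m k) (u k)‖ / 2 := by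
      rw [hns]
      rw [le_div_iff₀ (by positivity)] at htg
      nlinarith [mul_le_mul_of_nonneg_left htg ht]
    rw [hinner] at hdesc
    linarith [hdesc, h1, h2]
  -- uniform decrease in terms of Δ²
  set c : ℝ := min 1 (1 / (2 * κbhm * μ)) / (2 * μ) with hcdef
  have hc : 0 < c := by
    apply div_pos _ (by positivity)
    exact lt_min one_pos (by positivity)
  have hdecΔ : ∀ k, c * Δ k ^ 2 ≤ m k (u k) - m k (u k + d k) := by
    intro k
    set t : ℝ := min (Δ k) (‖gradient (m k) (u k)‖ / (2 * κbhm)) with htdef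
    have ht0 : 0 ≤ t := le_min (hΔpos k).le (by positivity)
    have hmin0 : (0:ℝ) ≤ min 1 (1 / (2 * κbhm * μ)) :=
      le_min one_pos.le (by positivity)
    have hmin : Δ k * min 1 (1 / (2 * κbhm * μ)) ≤ t := by
      apply le_min
      · calc Δ k * min 1 (1 / (2 * κbhm * μ)) ≤ Δ k * 1 :=
              mul_le_mul_of_nonneg_left (min_le_left _ _) (hΔpos k).le
          _ = Δ k := mul_one _
      · calc Δ k * min 1 (1 / (2 * κbhm * μ)) ≤ Δ k * (1 / (2 * κbhm * μ)) :=
              mul_le_mul_of_nonneg_left (min_le_right _ _) (hΔpos k).le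
          _ = (Δ k / μ) / (2 * κbhm) := by rw [mul_one_div, div_div]; ring_nf
          _ ≤ ‖gradient (m k) (u k)‖ / (2 * κbhm) := by gcongr; exact hgnorm k
    have hprod : (Δ k * min 1 (1 / (2 * κbhm * μ))) * (Δ k / μ) ≤
        t * ‖gradient (m k) (u k)‖ :=
      mul_le_mul hmin (hgnorm k) (div_nonneg (hΔpos k).le hμ.le) ht0
    have heq : c * Δ k ^ 2 = ((Δ k * min 1 (1 / (2 * κbhm * μ))) * (Δ k / μ)) / 2 := by
      rw [hcdef]
      field_simp
    rw [heq]
    calc ((Δ k * min 1 (1 / (2 * κbhm * μ))) * (Δ k / μ)) / 2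
        ≤ t * ‖gradient (m k) (u k)‖ / 2 := by linarith
      _ ≤ m k (u k) - m k (u k + d k) :=
          hCauchy k t ht0 (min_le_left _ _) (min_le_right _ _)
  have hDpos : ∀ k, 0 < m k (u k) - m k (u k + d k) := fun k =>
    lt_of_lt_of_le (mul_pos hc (pow_pos (hΔpos k) 2)) (hdecΔ k)
  -- ρ identity
  have hfdec : ∀ k, f (u k) - f (u k + d k) = ρ k * (m k (u k) - m k (u k + d k)) := by
    intro k
    rw [hρ k, div_mul_cancel₀ _ (ne_of_gt (hDpos k))]
  -- model–function error at the two points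
  have hfm : ∀ k, |(f (u k) - f (u k + d k)) - (m k (u k) - m k (u k + d k))|
      ≤ 2 * κef * Δ k ^ 2 := by
    intro k
    have h0 : |f (u k) - m k (u k)| ≤ κef * Δ k ^ 2 := by
      have := hfl_f k 0 (by simp [(hΔpos k).le])
      simpa using this
    have h1 : |f (u k + d k) - m k (u k + d k)| ≤ κef * Δ k ^ 2 := hfl_f k (d k) (hdle k)
    have h0' := abs_le.1 h0
    have h1' := abs_le.1 h1
    rw [abs_le]
    constructor <;> linarith [h0'.1, h0'.2, h1'.1, h1'.2]
  -- monotone decrease of f along iterates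
  have hmono : ∀ k, f (u (k + 1)) ≤ f (u k) := by
    intro k
    by_cases hk : ρ k < η₁
    · rw [hu_rej k hk]
    · push_neg at hk
      rw [hu_acc k hk]
      have h1 := hfdec k
      nlinarith [hDpos k, mul_nonneg (le_trans hη₁.le hk) (hDpos k).le]
  have haccdec : ∀ k, η₁ ≤ ρ k →
      η₁ * (m k (u k) - m k (u k + d k)) ≤ f (u k) - f (u (k + 1)) := by
    intro k hk
    rw [hu_acc k hk, hfdec k]
    exact mul_le_mul_of_nonneg_right hk (hDpos k).le
  -- f (u k) converges
  have hbdd : BddBelow (Set.range fun k => f (u k)) := by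
    obtain ⟨b, hb⟩ := hfbdd
    exact ⟨b, fun y ⟨k, hk⟩ => hk ▸ hb (Set.mem_range_self (u k))⟩
  have hanti : Antitone fun k => f (u k) := antitone_nat_of_succ_le hmono
  set fl : ℝ := ⨅ k, f (u k) with hfldef
  have hflim : Tendsto (fun k => f (u k)) atTop (nhds fl) :=
    tendsto_atTop_ciInf hanti hbdd
  have hfl_le : ∀ k, fl ≤ f (u k) := fun k => ciInf_le hbdd k
  have hgap0 : Tendsto (fun k => f (u k) - f (u (k + 1))) atTop (nhds 0) := by
    have h2 : Tendsto (fun k => f (u (k + 1))) atTop (nhds fl) :=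
      hflim.comp (tendsto_add_atTop_nat 1)
    simpa using hflim.sub h2
  -- radius update facts
  have hΔstep : ∀ k, Δ (k + 1) ≤ γinc * Δ k := by
    intro k
    by_cases h1 : ρ k < η₁
    · rw [hΔ_red k h1]
      nlinarith [hΔpos k]
    · by_cases h2 : η₂ < ρ k ∧ ‖d k‖ = Δ k
      · rw [hΔ_inc k h2]
        exact min_le_left _ _
      · rw [hΔ_keep k h2 h1]
        nlinarith [hΔpos k]
  have hΔup : ∀ k, ¬(ρ k < η₁) → Δ k ≤ Δ (k + 1) := by
    intro k h1
    by_cases h2 : η₂ < ρ k ∧ ‖d k‖ = Δ k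
    · rw [hΔ_inc k h2]
      exact le_min (by nlinarith [hΔpos k]) (hΔle k)
    · rw [hΔ_keep k h2 h1]
  -- Δ → 0
  have hΔ0 : Tendsto Δ atTop (nhds 0) := by
    have key : ∀ ε > (0:ℝ), ∃ N, ∀ k ≥ N, Δ k < ε := by
      intro ε hε
      have hε' : 0 < ε / γinc := div_pos hε hγinc0
      obtain ⟨N₀, hN₀⟩ := (Metric.tendsto_atTop.1 hgap0) (η₁ * (c * (ε / γinc) ^ 2))
        (mul_pos hη₁ (mul_pos hc (pow_pos hε' 2)))
      have hsmall : ∀ k, N₀ ≤ k → η₁ ≤ ρ k → Δ k < ε / γinc := by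
        intro k hk hacc
        have h1 := haccdec k hacc
        have h2 := hdecΔ k
        have h3 := hN₀ k hk
        rw [Real.dist_eq, sub_zero, abs_of_nonneg (by linarith [hmono k])] at h3
        have hΔ2 : Δ k ^ 2 < (ε / γinc) ^ 2 := by
          nlinarith [mul_le_mul_of_nonneg_left h2 hη₁.le, mul_pos hη₁ hc]
        exact lt_of_pow_lt_pow_left₀ 2 hε'.le hΔ2
      by_cases hEx : ∃ k₀, N₀ ≤ k₀ ∧ η₁ ≤ ρ k₀
      · obtain ⟨k₀, hk₀N, hk₀acc⟩ := hEx
        have hstep2 : ∀ j, Δ (k₀ + 1 + j) < ε := by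
          intro j
          induction j with
          | zero =>
            have h1 := hsmall k₀ hk₀N hk₀acc
            calc Δ (k₀ + 1 + 0) = Δ (k₀ + 1) := by norm_num
              _ ≤ γinc * Δ k₀ := hΔstep k₀
              _ < γinc * (ε / γinc) := mul_lt_mul_of_pos_left h1 hγinc0
              _ = ε := by field_simp
          | succ j ih =>
            have hkk : k₀ + 1 + (j + 1) = (k₀ + 1 + j) + 1 := by omega
            rw [hkk]
            by_cases hk : ρ (k₀ + 1 + j) < η₁
            · rw [hΔ_red _ hk]
              nlinarith [hΔpos (k₀ + 1 + j)]
            · push_neg at hk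
              have h1 := hsmall (k₀ + 1 + j) (by omega) hk
              calc Δ (k₀ + 1 + j + 1) ≤ γinc * Δ (k₀ + 1 + j) := hΔstep _
                _ < γinc * (ε / γinc) := mul_lt_mul_of_pos_left h1 hγinc0
                _ = ε := by field_simp
        refine ⟨k₀ + 1, fun k hk => ?_⟩
        obtain ⟨j, rfl⟩ := Nat.exists_eq_add_of_le hk
        exact hstep2 j
      · push_neg at hEx
        have hgeo : ∀ j, Δ (N₀ + j) = γred ^ j * Δ N₀ := by
          intro j
          induction j with
          | zero => simp
          | succ j ih =>
            have hkk : N₀ + (j + 1) = (N₀ + j) + 1 := by omega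
            rw [hkk, hΔ_red _ (hEx (N₀ + j) (by omega)), ih]
            ring
        have htend : Tendsto (fun j => γred ^ j * Δ N₀) atTop (nhds 0) := by
          have := (tendsto_pow_atTop_nhds_zero_of_lt_one hγred.le hγred1).mul_const (Δ N₀)
          simpa using this
        obtain ⟨J, hJ⟩ := (htend.eventually_lt_const hε).exists
        refine ⟨N₀ + J, fun k hk => ?_⟩
        obtain ⟨j, rfl⟩ := Nat.exists_eq_add_of_le hk
        rw [show N₀ + J + j = N₀ + (J + j) by omega, hgeo]
        have h2 : γred ^ (J + j) ≤ γred ^ J :=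
          pow_le_pow_of_le_one hγred.le hγred1.le (by omega)
        nlinarith [hΔpos N₀]
    rw [Metric.tendsto_atTop]
    intro ε hε
    obtain ⟨N, hN⟩ := key ε hε
    exact ⟨N, fun k hk => by
      rw [Real.dist_eq, sub_zero, abs_of_pos (hΔpos k)]
      exact hN k hk⟩
  -- full linearity of gradients at the iterate itself
  have hg0 : ∀ k, ‖gradient f (u k) - gradient (m k) (u k)‖ ≤ κeg * Δ k := by
    intro k
    have := hfl_g k 0 (by simp [(hΔpos k).le])
    simpa using this
  -- liminf-type statement
  have E1 : ∀ ε > (0:ℝ), ∀ N, ∃ k, N ≤ k ∧ ‖gradient f (u k)‖ < ε := by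
    intro ε hε N
    by_contra hcon
    push_neg at hcon
    set δ : ℝ := min (ε / (2 * κeg)) (min (ε / (4 * κbhm)) ((1 - η₁) * ε / (8 * κef)))
      with hδdef
    have hδpos : 0 < δ :=
      lt_min (by positivity) (lt_min (by positivity) (by positivity))
    obtain ⟨K, hK⟩ := eventually_atTop.1 (hΔ0.eventually_lt_const hδpos)
    have hρge : ∀ k, max K N ≤ k → η₁ ≤ ρ k := by
      intro k hk
      have hkK : K ≤ k := le_trans (le_max_left _ _) hk
      have hkN : N ≤ k := le_trans (le_max_right _ _) hk
      have hΔk : Δ k < δ := hK k hkK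
      have hFk : ε ≤ ‖gradient f (u k)‖ := hcon k hkN
      have hδ1 : δ ≤ ε / (2 * κeg) := min_le_left _ _
      have hδ2 : δ ≤ ε / (4 * κbhm) := le_trans (min_le_right _ _) (min_le_left _ _)
      have hδ3 : δ ≤ (1 - η₁) * ε / (8 * κef) :=
        le_trans (min_le_right _ _) (min_le_right _ _)
      have hgk : ε / 2 ≤ ‖gradient (m k) (u k)‖ := by
        have h2 := norm_sub_norm_le (gradient f (u k)) (gradient (m k) (u k))
        have h3 := hg0 k
        have h4 : κeg * Δ k ≤ ε / 2 := by
          have h5 : Δ k * (2 * κeg) ≤ ε := by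
            rw [← le_div_iff₀ (by positivity)]
            linarith
          linarith
        linarith
      have hdeck : Δ k * (ε / 2) / 2 ≤ m k (u k) - m k (u k + d k) := by
        have htg : Δ k ≤ ‖gradient (m k) (u k)‖ / (2 * κbhm) := by
          rw [le_div_iff₀ (by positivity)]
          have h5 : Δ k * (4 * κbhm) ≤ ε := by
            rw [← le_div_iff₀ (by positivity)]
            linarith
          nlinarith
        have := hCauchy k (Δ k) (hΔpos k).le le_rfl htg
        nlinarith [hΔpos k]
      have hfmk := abs_le.1 (hfm k)
      have hfd := hfdec k
      have hΔκ : 2 * κef * Δ k ^ 2 ≤ (1 - η₁) * (m k (u k) - m k (u k + d k)) := by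
        have h6 : 2 * κef * Δ k ≤ (1 - η₁) * ε / 4 := by
          have h7 : Δ k * (8 * κef) ≤ (1 - η₁) * ε := by
            rw [← le_div_iff₀ (by positivity)]
            linarith
          linarith [h7]
        nlinarith [hΔpos k, hdeck]
      nlinarith [hDpos k, hfmk.1]
    have hup : ∀ j, Δ (max K N) ≤ Δ (max K N + j) := by
      intro j
      induction j with
      | zero => simp
      | succ j ih =>
        have h1 : ¬(ρ (max K N + j) < η₁) := not_lt.2 (hρge _ (by omega))
        have h2 := hΔup _ h1
        have hkk : max K N + (j + 1) = (max K N + j) + 1 := by omega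
        rw [hkk]
        linarith
    obtain ⟨k, hk1, hk2⟩ :=
      ((hΔ0.eventually_lt_const (hΔpos (max K N))).and
        (eventually_ge_atTop (max K N))).exists
    obtain ⟨j, rfl⟩ := Nat.exists_eq_add_of_le hk2
    exact absurd (hup j) (not_le.2 hk1)
  -- main statement
  have main : ∀ ε > (0:ℝ), ∃ N, ∀ k ≥ N, ‖gradient f (u k)‖ < ε := by
    intro ε hε
    by_contra hcon
    push_neg at hcon
    set δ₁ : ℝ := min (ε / (4 * κeg)) (ε / (8 * κbhm)) with hδ₁def
    have hδ₁pos : 0 < δ₁ := lt_min (by positivity) (by positivity)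
    obtain ⟨K₁, hK₁⟩ := eventually_atTop.1 (hΔ0.eventually_lt_const hδ₁pos)
    -- single-step displacement bound
    have hstep : ∀ k, K₁ ≤ k → ε / 2 ≤ ‖gradient f (u k)‖ →
        ‖u (k + 1) - u k‖ ≤ 8 / (η₁ * ε) * (f (u k) - f (u (k + 1))) := by
      intro k hk hF
      by_cases hacc : ρ k < η₁
      · rw [hu_rej k hacc]
        simp
      · push_neg at hacc
        have hΔk : Δ k < δ₁ := hK₁ k hk
        have hδa : δ₁ ≤ ε / (4 * κeg) := min_le_left _ _
        have hδb : δ₁ ≤ ε / (8 * κbhm) := min_le_right _ _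
        have hgk : ε / 4 ≤ ‖gradient (m k) (u k)‖ := by
          have h2 := norm_sub_norm_le (gradient f (u k)) (gradient (m k) (u k))
          have h3 := hg0 k
          have h4 : κeg * Δ k ≤ ε / 4 := by
            have h5 : Δ k * (4 * κeg) ≤ ε := by
              rw [← le_div_iff₀ (by positivity)]
              linarith
            linarith [h5]
          linarith
        have hdeck : Δ k * (ε / 4) / 2 ≤ m k (u k) - m k (u k + d k) := by
          have htg : Δ k ≤ ‖gradient (m k) (u k)‖ / (2 * κbhm) := by
            rw [le_div_iff₀ (by positivity)]
            have h5 : Δ k * (8 * κbhm) ≤ ε := by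
              rw [← le_div_iff₀ (by positivity)]
              linarith
            nlinarith
          have := hCauchy k (Δ k) (hΔpos k).le le_rfl htg
          nlinarith [hΔpos k]
        have hfd := haccdec k hacc
        rw [hu_acc k hacc] at hfd ⊢
        have hnd : ‖u k + d k - u k‖ = ‖d k‖ := by congr 1; abel
        rw [hnd]
        have hC0 : 0 < η₁ * ε := mul_pos hη₁ hε
        rw [div_mul_eq_mul_div, le_div_iff₀ hC0]
        have h5 : ‖d k‖ ≤ Δ k := hdle k
        nlinarith [hfd, hdeck, mul_le_mul_of_nonneg_right h5 hC0.le]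
    -- threshold for the f-gap
    set β : ℝ := ε / 2 * (η₁ * ε) / (8 * L) with hβdef
    have hβpos : 0 < β := by positivity
    have hflgap : Tendsto (fun k => f (u k) - fl) atTop (nhds 0) := by
      simpa using hflim.sub (tendsto_const_nhds (x := fl))
    obtain ⟨K₂, hK₂⟩ := eventually_atTop.1 (hflgap.eventually_lt_const hβpos)
    obtain ⟨t, ht1, ht2⟩ := hcon (max K₁ K₂)
    have htK₁ : K₁ ≤ t := le_trans (le_max_left _ _) ht1
    have htK₂ : K₂ ≤ t := le_trans (le_max_right _ _) ht1
    have hex : ∃ n, ‖gradient f (u (t + n))‖ < ε / 2 := by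
      obtain ⟨k, hk1, hk2⟩ := E1 (ε / 2) (by positivity) t
      exact ⟨k - t, by rwa [Nat.add_sub_cancel' hk1]⟩
    set n₀ := Nat.find hex with hn₀def
    have hn₀ := Nat.find_spec hex
    have hbefore : ∀ i, i < n₀ → ε / 2 ≤ ‖gradient f (u (t + i))‖ := fun i hi =>
      not_lt.1 (Nat.find_min hex hi)
    have hchain : ∀ i, i ≤ n₀ →
        ‖u (t + i) - u t‖ ≤ 8 / (η₁ * ε) * (f (u t) - f (u (t + i))) := by
      intro i
      induction i with
      | zero => intro _; simp
      | succ i ih =>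
        intro hi
        have hi' : i ≤ n₀ := by omega
        have h1 := ih hi'
        have hF : ε / 2 ≤ ‖gradient f (u (t + i))‖ := hbefore i (by omega)
        have h2 := hstep (t + i) (by omega) hF
        have heq2 : t + (i + 1) = (t + i) + 1 := by omega
        rw [heq2]
        calc ‖u ((t + i) + 1) - u t‖
            ≤ ‖u ((t + i) + 1) - u (t + i)‖ + ‖u (t + i) - u t‖ :=
              norm_sub_le_norm_sub_add_norm_sub _ _ _
          _ ≤ 8 / (η₁ * ε) * (f (u (t + i)) - f (u ((t + i) + 1)))
              + 8 / (η₁ * ε) * (f (u t) - f (u (t + i))) := by linarith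
          _ = 8 / (η₁ * ε) * (f (u t) - f (u ((t + i) + 1))) := by ring
    have hub : ‖u (t + n₀) - u t‖ ≤ 8 / (η₁ * ε) * (f (u t) - fl) := by
      refine le_trans (hchain n₀ le_rfl) ?_
      have h7 := hfl_le (t + n₀)
      have h0 : (0:ℝ) ≤ 8 / (η₁ * ε) := by positivity
      nlinarith
    have hLip := hfLip (u t) (u (t + n₀))
    have htri := norm_sub_norm_le (gradient f (u t)) (gradient f (u (t + n₀)))
    have hgap : f (u t) - fl < β := hK₂ t htK₂
    have hrev : ‖u t - u (t + n₀)‖ = ‖u (t + n₀) - u t‖ := norm_sub_rev _ _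
    have hcalc : L * (8 / (η₁ * ε) * β) = ε / 2 := by
      rw [hβdef]
      field_simp
    have hchainineq : L * ‖u t - u (t + n₀)‖ < ε / 2 := by
      rw [hrev]
      calc L * ‖u (t + n₀) - u t‖ ≤ L * (8 / (η₁ * ε) * (f (u t) - fl)) := by
            nlinarith
        _ < L * (8 / (η₁ * ε) * β) := by
            have h0 : (0:ℝ) < 8 / (η₁ * ε) := by positivity
            have h8 := mul_lt_mul_of_pos_left hgap h0
            nlinarith
        _ = ε / 2 := hcalc
    linarith [hn₀, htri, hLip, hchainineq, ht2]
  rw [Metric.tendsto_atTop]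
  intro ε hε
  obtain ⟨N, hN⟩ := main ε hε
  exact ⟨N, fun k hk => by
    rw [Real.dist_eq, sub_zero, abs_of_nonneg (norm_nonneg _)]
    exact hN k hk⟩
end
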